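/- Let f(x,t) = Σ_n a_n e_n(x) e(n²t) on B × [0,1) with Σ_n n^{2s}|a_n|² ≤ 1 for some s > 1/2. Then ‖f‖_{L³_x L^∞_t} ≤ C(s), i.e. the function x ↦ sup_{t∈[0,1)} |f(x,t)| has L³ norm over B bounded by a constant depending only on s. -/

import Mathlib

open Real MeasureTheory

noncomputable abbrev E3 := EuclideanSpace ℝ (Fin 3)

/-- The open unit ball in `ℝ³`. -/
noncomputable def B3 : Set E3 := Metric.ball 0 1

open Classical in
/-- The radial eigenfunction `e_n(x) = sin(nπ|x|)/|x|`, extended by `e_n(0) = nπ`. -/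
noncomputable def eFun (n : ℕ) (x : E3) : ℝ :=
  if x = 0 then n * Real.pi else Real.sin (n * Real.pi * ‖x‖) / ‖x‖

/-- The character `e(θ) = e^{2πiθ}` evaluated at `θ = m t`. -/
noncomputable def eT (m : ℤ) (t : ℝ) : ℂ :=
  Complex.exp (2 * Real.pi * Complex.I * (m : ℂ) * (t : ℂ))

open scoped ENNReal NNReal

lemma finrank_E3 : Module.finrank ℝ E3 = 3 := by simp

lemma integrableOn_rpow_norm_ball3 {p : ℝ} (hp : -3 < p) (hp0 : p ≤ 0) :
    IntegrableOn (fun x : E3 => ‖x‖ ^ p) (Metric.ball (0:E3) 1) := by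
  constructor
  · exact (measurable_norm.pow measurable_const).aestronglyMeasurable
  · rw [hasFiniteIntegral_iff_norm]
    set r : ℕ → ℝ := fun k => (2:ℝ)⁻¹ ^ k with hr
    have hrpos : ∀ k, 0 < r k := fun k => pow_pos (by norm_num) k
    set A : ℕ → Set E3 := fun k => {x | r (k+1) ≤ ‖x‖} ∩ Metric.ball 0 (r k) with hA
    have cover : Metric.ball (0:E3) 1 ⊆ {0} ∪ ⋃ k, A k := by
      intro x hx
      rcases eq_or_ne x 0 with h0 | h0
      · exact Or.inl h0
      · have hxpos : 0 < ‖x‖ := norm_pos_iff.2 h0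
        have hex : ∃ k, r (k+1) ≤ ‖x‖ := by
          obtain ⟨n, hn⟩ := exists_pow_lt_of_lt_one hxpos (by norm_num : (2:ℝ)⁻¹ < 1)
          exact ⟨n, by
            have : r (n+1) ≤ r n := by
              apply pow_le_pow_of_le_one (by norm_num) (by norm_num)
              omega
            exact this.trans hn.le⟩
        refine Or.inr (Set.mem_iUnion.2 ⟨Nat.find hex, Nat.find_spec hex, ?_⟩)
        simp only [Metric.mem_ball, dist_zero_right]
        rcases Nat.eq_zero_or_pos (Nat.find hex) with hk | hk
        · rw [hk]
          simpa [hr] using (mem_ball_zero_iff.1 hx)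
        · obtain ⟨k', hk'⟩ := Nat.exists_eq_succ_of_ne_zero hk.ne'
          rw [hk']
          have := Nat.find_min hex (by omega : k' < Nat.find hex)
          push_neg at this
          simpa using this
    have meas_A : ∀ k, MeasurableSet (A k) := fun k =>
      ((measurableSet_le measurable_const measurable_norm).inter measurableSet_ball)
    set V : ℝ≥0∞ := volume (Metric.ball (0:E3) 1) with hV
    have hVfin : V < ⊤ := measure_ball_lt_top
    set ρ : ℝ := (2:ℝ)⁻¹ ^ (p+3) with hρ
    have hρ0 : 0 ≤ ρ := rpow_nonneg (by norm_num) _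
    have hρ1 : ρ < 1 := rpow_lt_one (by norm_num) (by norm_num) (by linarith)
    have key : ∀ k, (∫⁻ x in A k, ENNReal.ofReal ‖(‖x‖ ^ p : ℝ)‖ ∂volume)
        ≤ (ENNReal.ofReal ((2:ℝ)⁻¹ ^ p) * V) * (ENNReal.ofReal ρ) ^ k := by
      intro k
      have step1 : (∫⁻ x in A k, ENNReal.ofReal ‖(‖x‖ ^ p : ℝ)‖ ∂volume)
          ≤ ∫⁻ _ in A k, ENNReal.ofReal (r (k+1) ^ p) ∂volume := by
        apply setLIntegral_mono' (meas_A k)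
        intro x hx
        have h1 : r (k+1) ≤ ‖x‖ := hx.1
        have h2 : ‖x‖ ^ p ≤ r (k+1) ^ p :=
          rpow_le_rpow_of_nonpos (hrpos _) h1 hp0
        have h3 : (0:ℝ) ≤ ‖x‖ ^ p := rpow_nonneg (norm_nonneg _) _
        rw [Real.norm_of_nonneg h3]
        exact ENNReal.ofReal_le_ofReal h2
      have step2 : (∫⁻ _ in A k, ENNReal.ofReal (r (k+1) ^ p) ∂volume)
          = ENNReal.ofReal (r (k+1) ^ p) * volume (A k) := setLIntegral_const _ _
      have step3 : volume (A k) ≤ ENNReal.ofReal (r k ^ 3) * V := by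
        calc volume (A k) ≤ volume (Metric.ball (0:E3) (r k)) :=
              measure_mono Set.inter_subset_right
          _ = ENNReal.ofReal (r k ^ Module.finrank ℝ E3) * V := by
              rw [Measure.addHaar_ball _ _ (hrpos k).le, hV]
          _ = ENNReal.ofReal (r k ^ 3) * V := by rw [finrank_E3]
      have calc1 : ENNReal.ofReal (r (k+1) ^ p) * ENNReal.ofReal (r k ^ 3)
          = ENNReal.ofReal ((2:ℝ)⁻¹ ^ p) * (ENNReal.ofReal ρ) ^ k := by
        rw [← ENNReal.ofReal_pow hρ0, ← ENNReal.ofReal_mul (rpow_nonneg (hrpos _).le _),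
          ← ENNReal.ofReal_mul (rpow_nonneg (by norm_num) _)]
        congr 1
        have e1 : r (k+1) ^ p = (2:ℝ)⁻¹ ^ (((k:ℝ)+1) * p) := by
          simp only [hr]
          rw [← rpow_natCast ((2:ℝ)⁻¹) (k+1), ← rpow_mul (by norm_num)]
          push_cast; ring_nf
        have e2 : (r k : ℝ) ^ (3:ℕ) = (2:ℝ)⁻¹ ^ ((k:ℝ) * 3) := by
          simp only [hr]
          rw [← rpow_natCast ((2:ℝ)⁻¹) k, ← rpow_natCast (((2:ℝ)⁻¹) ^ ((k:ℝ))) 3,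
            ← rpow_mul (by norm_num)]
          norm_num
        have e3 : ρ ^ k = (2:ℝ)⁻¹ ^ ((p+3) * (k:ℝ)) := by
          rw [hρ, ← rpow_natCast (((2:ℝ)⁻¹) ^ (p+3)) k, ← rpow_mul (by norm_num)]
        rw [e1, e2, e3, ← rpow_add (by norm_num : (0:ℝ) < 2⁻¹),
          ← rpow_add (by norm_num : (0:ℝ) < 2⁻¹)]
        ring_nf
      calc (∫⁻ x in A k, ENNReal.ofReal ‖(‖x‖ ^ p : ℝ)‖ ∂volume)
          ≤ ENNReal.ofReal (r (k+1) ^ p) * volume (A k) := step1.trans_eq step2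
        _ ≤ ENNReal.ofReal (r (k+1) ^ p) * (ENNReal.ofReal (r k ^ 3) * V) :=
            mul_le_mul_right step3 _
        _ = (ENNReal.ofReal ((2:ℝ)⁻¹ ^ p) * V) * (ENNReal.ofReal ρ) ^ k := by
            rw [← mul_assoc, calc1]; ring
    calc (∫⁻ x in Metric.ball (0:E3) 1, ENNReal.ofReal ‖(‖x‖ ^ p : ℝ)‖ ∂volume)
        ≤ ∫⁻ x in ({0} ∪ ⋃ k, A k : Set E3), ENNReal.ofReal ‖(‖x‖ ^ p : ℝ)‖ ∂volume :=
          lintegral_mono_set cover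
      _ ≤ (∫⁻ x in ({0} : Set E3), ENNReal.ofReal ‖(‖x‖ ^ p : ℝ)‖ ∂volume)
          + ∫⁻ x in (⋃ k, A k : Set E3), ENNReal.ofReal ‖(‖x‖ ^ p : ℝ)‖ ∂volume :=
          lintegral_union_le _ _ _
      _ ≤ 0 + ∑' k, ∫⁻ x in A k, ENNReal.ofReal ‖(‖x‖ ^ p : ℝ)‖ ∂volume := by
          gcongr
          · rw [setLIntegral_measure_zero _ _ (measure_singleton 0)]
          · exact lintegral_iUnion_le _ _
      _ ≤ 0 + ∑' k, (ENNReal.ofReal ((2:ℝ)⁻¹ ^ p) * V) * (ENNReal.ofReal ρ) ^ k := by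
          gcongr with k
          exact key k
      _ = (ENNReal.ofReal ((2:ℝ)⁻¹ ^ p) * V) * (1 - ENNReal.ofReal ρ)⁻¹ := by
          rw [zero_add, ENNReal.tsum_mul_left, ENNReal.tsum_geometric]
      _ < ⊤ := by
          apply ENNReal.mul_lt_top
          · exact ENNReal.mul_lt_top ENNReal.ofReal_lt_top hVfin
          · rw [lt_top_iff_ne_top]
            simp only [ne_eq, ENNReal.inv_eq_top]
            rw [tsub_eq_zero_iff_le]
            exact fun h => absurd (lt_of_lt_of_le (ENNReal.ofReal_lt_one.2 hρ1) h) (lt_irrefl _)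

lemma norm_eT (m : ℤ) (t : ℝ) : ‖eT m t‖ = 1 := by
  rw [eT, Complex.norm_exp]
  simp [Complex.mul_re, Complex.mul_im]


lemma eFun_bound {θ : ℝ} (hθ0 : 0 < θ) (hθ1 : θ ≤ 1) (n : ℕ) {x : E3} (hx : x ≠ 0) :
    |eFun (n + 1) x| ≤ ((n : ℝ) + 1) ^ θ * (π ^ θ * ‖x‖ ^ (θ - 1)) := by
  have hxpos : 0 < ‖x‖ := norm_pos_iff.2 hx
  rw [eFun, if_neg hx]
  set u : ℝ := ((n + 1 : ℕ) : ℝ) * π * ‖x‖ with hu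
  have hupos : 0 < u := by positivity
  have hsin : |Real.sin u| ≤ min 1 u :=
    le_min (abs_le.2 ⟨neg_one_le_sin u, sin_le_one u⟩)
      (abs_sin_le_abs.trans (le_of_eq (abs_of_pos hupos)))
  have hmin : min 1 u ≤ u ^ θ := by
    have hm0 : 0 < min 1 u := lt_min one_pos hupos
    calc min 1 u = (min 1 u) ^ θ * (min 1 u) ^ (1 - θ) := by
          rw [← rpow_add hm0]; norm_num
      _ ≤ u ^ θ * 1 := by
          apply mul_le_mul
          · exact rpow_le_rpow hm0.le (min_le_right _ _) hθ0.le
          · exact rpow_le_one hm0.le (min_le_left _ _) (by linarith)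
          · exact rpow_nonneg hm0.le _
          · exact rpow_nonneg hupos.le _
      _ = u ^ θ := mul_one _
  have habs : |Real.sin u / ‖x‖| = |Real.sin u| / ‖x‖ := by
    rw [abs_div, abs_of_pos hxpos]
  rw [habs]
  have hub : u ^ θ = ((n : ℝ) + 1) ^ θ * π ^ θ * ‖x‖ ^ θ := by
    rw [hu, mul_rpow (by positivity) hxpos.le, mul_rpow (by positivity) pi_pos.le]
    push_cast
    ring
  calc |Real.sin u| / ‖x‖ ≤ u ^ θ / ‖x‖ := by
        apply div_le_div_of_nonneg_right ?_ hxpos.le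
        exact hsin.trans hmin
    _ = ((n : ℝ) + 1) ^ θ * (π ^ θ * ‖x‖ ^ (θ - 1)) := by
        rw [hub, rpow_sub hxpos, rpow_one]
        ring

/-- `L³_x L^∞_t` bound: if `f(x,t) = Σ_n a_n e_n(x) e(n²t)` with `Σ_n n^{2s}|a_n|² ≤ 1`
for some `s > 1/2`, then `‖f‖_{L³_x L^∞_t} ≤ C(s)`. -/
theorem L3xLinf_bound (s : ℝ) (hs : 1 / 2 < s) :
    ∃ C > 0, ∀ a : ℕ → ℂ,
      Summable (fun n : ℕ => ((n : ℝ) + 1) ^ (2 * s) * ‖a n‖ ^ 2) →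
      (∑' n : ℕ, ((n : ℝ) + 1) ^ (2 * s) * ‖a n‖ ^ 2) ≤ 1 →
      (∫ x in B3, (⨆ t : Set.Ico (0 : ℝ) 1,
          ‖∑' n : ℕ, a n * ((eFun (n + 1) x : ℝ) : ℂ) * eT (((n : ℤ) + 1) ^ 2) t‖)
        ^ (3 : ℝ)) ^ ((1 : ℝ) / 3) ≤ C := by
  haveI : Nonempty (Set.Ico (0:ℝ) 1) := ⟨⟨0, le_refl 0, by norm_num⟩⟩
  have sqr : ∀ (b c : ℝ), 0 ≤ b → (b ^ c)^(2:ℕ) = b^(2*c) := fun b c hb => by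
    rw [← rpow_natCast (b^c) 2, ← rpow_mul hb]
    norm_num [mul_comm]
  set θ : ℝ := (min (s - 1/2) 1) / 2 with hθdef
  have hmin0 : 0 < min (s - 1/2) 1 := lt_min (by linarith) one_pos
  have hθpos : 0 < θ := by rw [hθdef]; linarith
  have hθhalf : θ ≤ 1/2 := by
    have := min_le_right (s - 1/2) 1
    rw [hθdef]; linarith
  have hθs : 2*θ - 2*s < -1 := by
    have h1 := min_le_left (s - 1/2) 1
    have h2θ : 2*θ = min (s - 1/2) 1 := by rw [hθdef]; ring
    linarith
  have hsum2 : Summable (fun n : ℕ => ((n:ℝ)+1) ^ (2*θ - 2*s)) := by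
    have h := Real.summable_nat_rpow.mpr hθs
    have h2 := (summable_nat_add_iff 1).mpr h
    refine h2.congr fun n => ?_
    push_cast
    ring_nf
  set K : ℝ := π ^ (2*θ) * (∑' n : ℕ, ((n:ℝ)+1) ^ (2*θ - 2*s)) with hK
  have hKpos : 0 < K := by
    apply mul_pos (rpow_pos_of_pos pi_pos _)
    refine Summable.tsum_pos hsum2 (fun n => rpow_nonneg (by positivity) _) 0 ?_
    exact rpow_pos_of_pos (by norm_num) _
  set M : ℝ := Real.sqrt K with hM
  have hMpos : 0 < M := Real.sqrt_pos.2 hKpos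
  have hM2 : M ^ 2 = K := Real.sq_sqrt hKpos.le
  set q : ℝ := 3*θ - 3 with hq
  have hq1 : -3 < q := by rw [hq]; linarith
  have hq2 : q ≤ 0 := by rw [hq]; linarith
  have hInt : IntegrableOn (fun x : E3 => ‖x‖ ^ q) B3 :=
    integrableOn_rpow_norm_ball3 hq1 hq2
  set I : ℝ := ∫ x in B3, ‖x‖ ^ q with hI
  have hI0 : 0 ≤ I :=
    integral_nonneg fun x => rpow_nonneg (norm_nonneg _) _
  refine ⟨(M^3 * I) ^ ((1:ℝ)/3) + 1, by positivity, ?_⟩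
  intro a hasum hale
  have main : ∀ x : E3, x ≠ 0 →
      (⨆ t : Set.Ico (0:ℝ) 1,
        ‖∑' n : ℕ, a n * ((eFun (n + 1) x : ℝ) : ℂ) * eT (((n : ℤ) + 1) ^ 2) t‖)
      ≤ M * ‖x‖ ^ (θ - 1) := by
    intro x hx
    have hxpos : 0 < ‖x‖ := norm_pos_iff.2 hx
    set lam : ℝ := M * ‖x‖ ^ (θ - 1) with hlam
    have hlampos : 0 < lam := mul_pos hMpos (rpow_pos_of_pos hxpos _)
    set u : ℕ → ℝ := fun n => ((n:ℝ)+1) ^ s * ‖a n‖ with hudef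
    set v : ℕ → ℝ := fun n => ((n:ℝ)+1) ^ (-s) * |eFun (n+1) x| with hvdef
    have hu0 : ∀ n, 0 ≤ u n := fun n => by
      simp only [hudef]; positivity
    have hv0 : ∀ n, 0 ≤ v n := fun n => by
      simp only [hvdef]
      exact mul_nonneg (rpow_nonneg (by positivity) _) (abs_nonneg _)
    have hu2 : ∀ n : ℕ, u n ^ 2 = ((n:ℝ)+1) ^ (2*s) * ‖a n‖ ^ 2 := by
      intro n
      simp only [hudef]
      rw [mul_pow, sqr _ _ (by positivity)]
    have husum : Summable (fun n => u n ^ 2) := hasum.congr fun n => (hu2 n).symm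
    have hutsum : (∑' n, u n ^ 2) ≤ 1 := by
      calc (∑' n, u n ^ 2) = ∑' n : ℕ, ((n:ℝ)+1) ^ (2*s) * ‖a n‖ ^ 2 := tsum_congr hu2
        _ ≤ 1 := hale
    have hv2 : ∀ n : ℕ, v n ^ 2 ≤ ((n:ℝ)+1) ^ (2*θ - 2*s) * (π ^ (2*θ) * ‖x‖ ^ (2*θ-2)) := by
      intro n
      have hnp : (0:ℝ) < (n:ℝ)+1 := by positivity
      have he := eFun_bound hθpos (by linarith) n hx
      have he2 : |eFun (n+1) x| ^ 2 ≤ (((n : ℝ) + 1) ^ θ * (π ^ θ * ‖x‖ ^ (θ - 1))) ^ 2 :=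
        pow_le_pow_left₀ (abs_nonneg _) he 2
      calc v n ^ 2 = ((n:ℝ)+1) ^ (2*(-s)) * |eFun (n+1) x| ^ 2 := by
            simp only [hvdef]
            rw [mul_pow, sqr _ _ hnp.le]
        _ ≤ ((n:ℝ)+1) ^ (2*(-s)) * (((n : ℝ) + 1) ^ θ * (π ^ θ * ‖x‖ ^ (θ - 1))) ^ 2 :=
            mul_le_mul_of_nonneg_left he2 (rpow_nonneg hnp.le _)
        _ = ((n:ℝ)+1) ^ (2*θ - 2*s) * (π ^ (2*θ) * ‖x‖ ^ (2*θ-2)) := by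
            rw [mul_pow, mul_pow, sqr _ _ hnp.le, sqr _ _ pi_pos.le,
              sqr _ _ (norm_nonneg x), ← mul_assoc, ← rpow_add hnp,
              show 2*(-s) + 2*θ = 2*θ - 2*s from by ring,
              show 2*(θ-1) = 2*θ - 2 from by ring]
    have hmaj : Summable (fun n : ℕ => ((n:ℝ)+1) ^ (2*θ - 2*s) * (π ^ (2*θ) * ‖x‖ ^ (2*θ-2))) :=
      hsum2.mul_right _
    have hvsum : Summable (fun n => v n ^ 2) :=
      Summable.of_nonneg_of_le (fun n => sq_nonneg _) hv2 hmaj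
    have hvtsum : (∑' n, v n ^ 2) ≤ K * ‖x‖ ^ (2*θ-2) := by
      calc (∑' n, v n ^ 2)
          ≤ ∑' n : ℕ, ((n:ℝ)+1) ^ (2*θ - 2*s) * (π ^ (2*θ) * ‖x‖ ^ (2*θ-2)) :=
            Summable.tsum_le_tsum hv2 hvsum hmaj
        _ = (∑' n : ℕ, ((n:ℝ)+1) ^ (2*θ - 2*s)) * (π ^ (2*θ) * ‖x‖ ^ (2*θ-2)) := tsum_mul_right
        _ = K * ‖x‖ ^ (2*θ-2) := by rw [hK]; ring
    have hlam2 : lam ^ 2 = K * ‖x‖ ^ (2*θ-2) := by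
      rw [hlam, mul_pow, hM2, sqr _ _ (norm_nonneg x),
        show 2*(θ-1) = 2*θ - 2 from by ring]
    have hmul : ∀ n, u n * v n ≤ (lam * u n ^ 2 + v n ^ 2 / lam) / 2 := by
      intro n
      have h2 : 2*lam*(u n * v n) ≤ lam^2 * u n ^2 + v n ^2 := by
        nlinarith [sq_nonneg (lam * u n - v n)]
      have hres : u n * v n ≤ (lam^2 * u n ^2 + v n ^2) / (2*lam) := by
        rw [le_div_iff₀ (by positivity)]
        linarith
      calc u n * v n ≤ (lam^2 * u n ^2 + v n ^2) / (2*lam) := hres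
        _ = (lam * u n ^ 2 + v n ^ 2 / lam) / 2 := by
            field_simp
    have hmajsum : Summable (fun n => (lam * u n ^ 2 + v n ^ 2 / lam) / 2) :=
      (((husum.mul_left lam).add (hvsum.div_const lam)).div_const 2)
    have huvsum : Summable (fun n => u n * v n) :=
      Summable.of_nonneg_of_le (fun n => mul_nonneg (hu0 n) (hv0 n)) hmul hmajsum
    have hS : (∑' n, u n * v n) ≤ lam := by
      have e1 : (∑' n, (lam * u n ^ 2 + v n ^ 2 / lam) / 2)
          = (lam * (∑' n, u n ^ 2) + (∑' n, v n ^ 2) / lam) / 2 := by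
        rw [tsum_div_const, Summable.tsum_add (husum.mul_left lam) (hvsum.div_const lam),
          tsum_mul_left, tsum_div_const]
      calc (∑' n, u n * v n) ≤ ∑' n, (lam * u n ^ 2 + v n ^ 2 / lam) / 2 :=
            Summable.tsum_le_tsum hmul huvsum hmajsum
        _ = (lam * (∑' n, u n ^ 2) + (∑' n, v n ^ 2) / lam) / 2 := e1
        _ ≤ (lam * 1 + (K * ‖x‖ ^ (2*θ-2)) / lam) / 2 := by
            gcongr
        _ = (lam + lam ^ 2 / lam) / 2 := by rw [← hlam2, mul_one]
        _ = lam := by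
            rw [sq, mul_div_assoc, div_self hlampos.ne', mul_one]
            ring
    have hterm : ∀ (n : ℕ) (t : Set.Ico (0:ℝ) 1),
        ‖a n * ((eFun (n + 1) x : ℝ) : ℂ) * eT (((n : ℤ) + 1) ^ 2) (t:ℝ)‖ = u n * v n := by
      intro n t
      have hnp : (0:ℝ) < (n:ℝ)+1 := by positivity
      have hprod : ((n:ℝ)+1) ^ s * ((n:ℝ)+1) ^ (-s) = 1 := by
        rw [← rpow_add hnp]; norm_num
      rw [norm_mul, norm_mul, norm_eT, mul_one, Complex.norm_real, Real.norm_eq_abs]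
      simp only [hudef, hvdef]
      have : (((n:ℝ)+1) ^ s * ‖a n‖) * (((n:ℝ)+1) ^ (-s) * |eFun (n+1) x|)
          = (((n:ℝ)+1) ^ s * ((n:ℝ)+1) ^ (-s)) * (‖a n‖ * |eFun (n+1) x|) := by ring
      rw [this, hprod, one_mul]
    apply ciSup_le
    intro t
    have hnorms : Summable (fun n : ℕ =>
        ‖a n * ((eFun (n + 1) x : ℝ) : ℂ) * eT (((n : ℤ) + 1) ^ 2) (t:ℝ)‖) :=
      huvsum.congr fun n => (hterm n t).symm
    calc ‖∑' n : ℕ, a n * ((eFun (n + 1) x : ℝ) : ℂ) * eT (((n : ℤ) + 1) ^ 2) (t:ℝ)‖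
        ≤ ∑' n : ℕ, ‖a n * ((eFun (n + 1) x : ℝ) : ℂ) * eT (((n : ℤ) + 1) ^ 2) (t:ℝ)‖ :=
          norm_tsum_le_tsum_norm hnorms
      _ = ∑' n, u n * v n := tsum_congr fun n => hterm n t
      _ ≤ lam := hS
  -- now integrate
  set g : E3 → ℝ := fun x => (⨆ t : Set.Ico (0:ℝ) 1,
      ‖∑' n : ℕ, a n * ((eFun (n + 1) x : ℝ) : ℂ) * eT (((n : ℤ) + 1) ^ 2) (t:ℝ)‖) ^ (3:ℝ)
    with hg
  have hg0 : ∀ x, 0 ≤ g x := fun x =>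
    rpow_nonneg (Real.iSup_nonneg fun t => norm_nonneg _) _
  have hint2 : Integrable (fun x : E3 => M^3 * ‖x‖ ^ q) (volume.restrict B3) :=
    hInt.const_mul _
  have hae : ∀ᵐ x ∂(volume.restrict B3), g x ≤ M^3 * ‖x‖ ^ q := by
    have hnull : ∀ᵐ x ∂(volume.restrict B3), x ≠ (0:E3) := by
      have h0 : ∀ᵐ x ∂(volume : Measure E3), x ≠ 0 := by
        rw [ae_iff]
        simpa using measure_singleton (0:E3)
      exact h0.filter_mono (ae_mono Measure.restrict_le_self)
    filter_upwards [hnull] with x hx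
    have h1 := main x hx
    have hsup0 : 0 ≤ ⨆ t : Set.Ico (0:ℝ) 1,
        ‖∑' n : ℕ, a n * ((eFun (n + 1) x : ℝ) : ℂ) * eT (((n : ℤ) + 1) ^ 2) (t:ℝ)‖ :=
      Real.iSup_nonneg fun t => norm_nonneg _
    calc g x ≤ (M * ‖x‖ ^ (θ - 1)) ^ (3:ℝ) := rpow_le_rpow hsup0 h1 (by norm_num)
      _ = M ^ 3 * ‖x‖ ^ q := by
          rw [mul_rpow hMpos.le (rpow_nonneg (norm_nonneg x) _),
            ← rpow_natCast M 3, ← rpow_mul (norm_nonneg x),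
            show (θ - 1) * 3 = q from by rw [hq]; ring]
          norm_num
  have hgle : (∫ x in B3, g x) ≤ ∫ x in B3, M^3 * ‖x‖ ^ q :=
    integral_mono_of_nonneg (Filter.Eventually.of_forall fun x => hg0 x) hint2 hae
  have hval : (∫ x in B3, M^3 * ‖x‖ ^ q) = M^3 * I := by
    rw [hI]
    exact integral_const_mul _ _
  have hg_int_nonneg : 0 ≤ ∫ x in B3, g x :=
    integral_nonneg fun x => hg0 x
  calc (∫ x in B3, g x) ^ ((1:ℝ)/3) ≤ (M^3 * I) ^ ((1:ℝ)/3) := by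
        apply rpow_le_rpow hg_int_nonneg (hgle.trans_eq hval) (by norm_num)
    _ ≤ (M^3 * I) ^ ((1:ℝ)/3) + 1 := by linarith
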